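/- Let p_1 > 3 be a prime such that p_2 = 2p_1 − 1 is also prime, and let n = p_1 p_2. Then the number of Euler liars for n in (Z/nZ)* is exactly φ(n)/4, and among these Euler liars exactly half have Jacobi symbol (a/n) = 1 and half have (a/n) = −1. -/

import Mathlib

open scoped Classical

/-- The Carmichael lambda function: the least `ℓ > 0` with `a ^ ℓ ≡ 1 (mod n)`
for all `a` coprime to `n`. -/
noncomputable def carmichaelLambda (n : ℕ) : ℕ :=
  sInf {ℓ : ℕ | 0 < ℓ ∧ ∀ a : ℕ, Nat.Coprime a n → a ^ ℓ ≡ 1 [MOD n]}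

/-- A Carmichael number: a composite `n` with `a ^ (n-1) ≡ 1 (mod n)`
for all `a` coprime to `n`. -/
def IsCarmichael (n : ℕ) : Prop :=
  1 < n ∧ ¬ n.Prime ∧ ∀ a : ℕ, Nat.Coprime a n → a ^ (n - 1) ≡ 1 [MOD n]

/-- The Euler liars for `n`, as residues in `{0, …, n-1}` coprime to `n` with
`(a/n) ≡ a ^ ((n-1)/2) (mod n)`. -/
noncomputable def eulerLiars (n : ℕ) : Finset ℕ :=
  (Finset.range n).filter
    (fun a => Nat.Coprime a n ∧ (jacobiSym (a : ℤ) n ≡ (a : ℤ) ^ ((n - 1) / 2) [ZMOD n]))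

/- Auxiliary counting lemma: number of `d`-th roots of unity in `ZMod p`. -/
lemma aux_card_pow_eq_one {p : ℕ} [Fact p.Prime] {d : ℕ} (hd : 0 < d) (hdvd : d ∣ p - 1) :
    (Finset.univ.filter fun x : ZMod p => x ^ d = 1).card = d := by
  obtain ⟨g, hg⟩ := IsCyclic.exists_ofOrder_eq_natCard (α := (ZMod p)ˣ)
  have hp2 : 2 ≤ p := (Fact.out : p.Prime).two_le
  have hcard : Nat.card (ZMod p)ˣ = p - 1 := by
    rw [Nat.card_eq_fintype_card, ZMod.card_units_eq_totient,
      Nat.totient_prime (Fact.out : p.Prime)]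
  rw [hcard] at hg
  have hζ : IsPrimitiveRoot ((g : ZMod p)) (p - 1) := by
    have h := IsPrimitiveRoot.orderOf ((g : ZMod p))
    rwa [orderOf_units, hg] at h
  obtain ⟨c, hc⟩ := hdvd
  have hp1 : 0 < p - 1 := by omega
  have hprim : IsPrimitiveRoot ((g : ZMod p) ^ c) d := hζ.pow hp1 (by rw [hc, mul_comm])
  have heq : (Finset.univ.filter fun x : ZMod p => x ^ d = 1)
      = Polynomial.nthRootsFinset d (1 : ZMod p) := by
    ext x
    simp [Polynomial.mem_nthRootsFinset hd]
  rw [heq, hprim.card_nthRootsFinset]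

/- Auxiliary counting lemma: number of solutions of `x ^ d = -1` in `ZMod p`. -/
lemma aux_card_pow_eq_neg_one {p : ℕ} [Fact p.Prime] (hp2 : 2 < p) {d : ℕ} (hd : 0 < d)
    (hdvd : 2 * d ∣ p - 1) :
    (Finset.univ.filter fun x : ZMod p => x ^ d = -1).card = d := by
  haveI : Fact (2 < p) := ⟨hp2⟩
  have h1 : (Finset.univ.filter fun x : ZMod p => x ^ d = 1).card = d :=
    aux_card_pow_eq_one hd (dvd_trans (dvd_mul_left d 2) hdvd)
  have h2 : (Finset.univ.filter fun x : ZMod p => x ^ (2 * d) = 1).card = 2 * d :=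
    aux_card_pow_eq_one (by omega) hdvd
  have hsplit : (Finset.univ.filter fun x : ZMod p => x ^ (2 * d) = 1)
      = (Finset.univ.filter fun x : ZMod p => x ^ d = 1)
        ∪ (Finset.univ.filter fun x : ZMod p => x ^ d = -1) := by
    rw [← Finset.filter_or]
    apply Finset.filter_congr
    intro x _
    rw [mul_comm, pow_mul, pow_two, mul_self_eq_one_iff]
  have hdisj : Disjoint (Finset.univ.filter fun x : ZMod p => x ^ d = 1)
      (Finset.univ.filter fun x : ZMod p => x ^ d = -1) := by
    rw [Finset.disjoint_left]
    intro x hx hx'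
    rw [Finset.mem_filter] at hx hx'
    exact ZMod.neg_one_ne_one (hx.2.symm.trans hx'.2).symm
  rw [hsplit, Finset.card_union_of_disjoint hdisj, h1] at h2
  omega

/- Legendre symbol equals 1 iff the Euler power is 1. -/
lemma aux_legendre_one_iff {p : ℕ} [Fact p.Prime] (hp2 : 2 < p) (a : ℕ) :
    legendreSym p a = 1 ↔ (a : ZMod p) ^ (p / 2) = 1 := by
  haveI : Fact (2 < p) := ⟨hp2⟩
  have hc : (((a : ℤ)) : ZMod p) = (a : ZMod p) := by push_cast; rfl
  have E := legendreSym.eq_pow p (a : ℤ)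
  rw [hc] at E
  by_cases h0 : (a : ZMod p) = 0
  · have hz : legendreSym p a = 0 := (legendreSym.eq_zero_iff p _).mpr (by rw [hc]; exact h0)
    rw [hz, h0]
    rw [zero_pow (by omega : p / 2 ≠ 0)]
    simp
  · rcases legendreSym.eq_one_or_neg_one p (by rw [hc]; exact h0) with h | h <;> rw [h] <;>
      rw [h] at E <;> push_cast at E
    · simp [← E]
    · constructor
      · intro hx; exact absurd hx (by norm_num)
      · intro hx
        rw [← E] at hx
        exfalso
        apply ZMod.neg_one_ne_one (n := p)
        first | exact hx | exact hx.symm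
/- Legendre symbol equals -1 iff the Euler power is -1. -/
lemma aux_legendre_neg_one_iff {p : ℕ} [Fact p.Prime] (hp2 : 2 < p) (a : ℕ) :
    legendreSym p a = -1 ↔ (a : ZMod p) ^ (p / 2) = -1 := by
  haveI : Fact (2 < p) := ⟨hp2⟩
  have hc : (((a : ℤ)) : ZMod p) = (a : ZMod p) := by push_cast; rfl
  have E := legendreSym.eq_pow p (a : ℤ)
  rw [hc] at E
  by_cases h0 : (a : ZMod p) = 0
  · have hz : legendreSym p a = 0 := (legendreSym.eq_zero_iff p _).mpr (by rw [hc]; exact h0)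
    rw [hz, h0]
    rw [zero_pow (by omega : p / 2 ≠ 0)]
    constructor
    · intro hx; exact absurd hx (by norm_num)
    · intro hx; exact absurd hx.symm (neg_ne_zero.mpr one_ne_zero)
  · rcases legendreSym.eq_one_or_neg_one p (by rw [hc]; exact h0) with h | h <;> rw [h] <;>
      rw [h] at E <;> push_cast at E
    · constructor
      · intro hx; exact absurd hx (by norm_num)
      · intro hx
        rw [← E] at hx
        exfalso
        apply ZMod.neg_one_ne_one (n := p)
        first | exact hx | exact hx.symm
    · simp [← E]


/- Counting via CRT bijection. -/
lemma aux_card_crt {p₁ p₂ : ℕ} [NeZero p₁] [NeZero p₂] (hcop : Nat.Coprime p₁ p₂)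
    (P : ZMod p₁ → Prop) (Q : ZMod p₂ → Prop) [DecidablePred P] [DecidablePred Q]
    [DecidablePred fun a : ℕ => P (a : ZMod p₁) ∧ Q (a : ZMod p₂)] :
    ((Finset.range (p₁ * p₂)).filter fun a : ℕ => P (a : ZMod p₁) ∧ Q (a : ZMod p₂)).card
      = (Finset.univ.filter P).card * (Finset.univ.filter Q).card := by
  haveI : NeZero (p₁ * p₂) := ⟨mul_ne_zero (NeZero.ne p₁) (NeZero.ne p₂)⟩
  rw [← Finset.card_product]
  set C := ZMod.chineseRemainder hcop with hC
  have hCnat : ∀ a : ℕ, C (a : ZMod (p₁ * p₂)) = ((a : ZMod p₁), (a : ZMod p₂)) := by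
    intro a
    rw [map_natCast]
    constructor
  apply Finset.card_bij' (fun (a : ℕ) _ => ((a : ZMod p₁), (a : ZMod p₂)))
    (fun z _ => (C.symm z).val)
  · intro a ha
    rw [Finset.mem_filter] at ha
    rw [Finset.mem_product, Finset.mem_filter, Finset.mem_filter]
    exact ⟨⟨Finset.mem_univ _, ha.2.1⟩, ⟨Finset.mem_univ _, ha.2.2⟩⟩
  · intro z hz
    rw [Finset.mem_product, Finset.mem_filter, Finset.mem_filter] at hz
    rw [Finset.mem_filter]
    have hv : ((C.symm z).val : ZMod (p₁ * p₂)) = C.symm z := by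
      rw [ZMod.natCast_val, ZMod.cast_id]
    have hz' : (((C.symm z).val : ZMod p₁), ((C.symm z).val : ZMod p₂)) = z := by
      rw [← hCnat, hv, RingEquiv.apply_symm_apply]
    refine ⟨Finset.mem_range.mpr (ZMod.val_lt _), ?_, ?_⟩
    · have h2 := hz.1.2
      rw [← hz'] at h2
      exact h2
    · have h2 := hz.2.2
      rw [← hz'] at h2
      exact h2
  · intro a ha
    rw [Finset.mem_filter, Finset.mem_range] at ha
    rw [← hCnat, RingEquiv.symm_apply_apply, ZMod.val_cast_of_lt ha.1]
  · intro z hz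
    have hv : ((C.symm z).val : ZMod (p₁ * p₂)) = C.symm z := by
      rw [ZMod.natCast_val, ZMod.cast_id]
    rw [← hCnat, hv, RingEquiv.apply_symm_apply]

/- Filtering the coercion of a `Finset ℕ` to `Finset ℤ`. -/
lemma aux_coe_card (s : Finset ℕ) (p : ℤ → Prop) [DecidablePred p] :
    (Finset.filter p (s >>= fun a => pure ((a : ℕ) : ℤ))).card
      = (s.filter (fun a : ℕ => p (a : ℤ))).card := by
  have himg : (s >>= fun a => pure ((a : ℕ) : ℤ)) = s.image (fun a : ℕ => (a : ℤ)) := by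
    ext x
    simp only [Finset.bind_def]
    simp only [Finset.mem_sup, Finset.pure_def, Finset.mem_singleton, Finset.mem_image]
    tauto
  rw [himg, Finset.filter_image]
  exact Finset.card_image_of_injective _ (fun a b h => by exact_mod_cast h)

theorem sophieGerminus_eulerLiars (p₁ p₂ n : ℕ)
    (hp₁ : p₁.Prime) (hp₁3 : 3 < p₁)
    (hp₂def : p₂ = 2 * p₁ - 1) (hp₂ : p₂.Prime) (hn : n = p₁ * p₂) :
    (eulerLiars n).card = n.totient / 4 ∧
    ((eulerLiars n).filter (fun a => jacobiSym (a : ℤ) n = 1)).card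
      = (eulerLiars n).card / 2 ∧
    ((eulerLiars n).filter (fun a => jacobiSym (a : ℤ) n = -1)).card
      = (eulerLiars n).card / 2 := by
  subst hn
  haveI F₁ : Fact p₁.Prime := ⟨hp₁⟩
  haveI F₂ : Fact p₂.Prime := ⟨hp₂⟩
  obtain ⟨q, hq⟩ : Odd p₁ := hp₁.odd_of_ne_two (by omega)
  rw [two_mul] at hq
  rw [show q + q + 1 = 2 * q + 1 by ring] at hq
  have hq2 : 2 ≤ q := by omega
  have hp₂q : p₂ = 4 * q + 1 := by omega
  have hp₁1 : p₁ - 1 = 2 * q := by omega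
  have hp₂1 : p₂ - 1 = 4 * q := by omega
  have hp₁2 : p₁ / 2 = q := by omega
  have hp₂2 : p₂ / 2 = 2 * q := by omega
  haveI : Fact (2 < p₁) := ⟨by omega⟩
  haveI : Fact (2 < p₂) := ⟨by omega⟩
  haveI : NeZero (p₁ * p₂) := ⟨Nat.mul_ne_zero hp₁.pos.ne' hp₂.pos.ne'⟩
  have hcop : Nat.Coprime p₁ p₂ := (Nat.coprime_primes hp₁ hp₂).mpr (by omega)
  -- the exponent
  have hnprod : p₁ * p₂ = 2 * (4 * q ^ 2 + 3 * q) + 1 := by rw [hq, hp₂q]; ring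
  have he : (p₁ * p₂ - 1) / 2 = 4 * q ^ 2 + 3 * q := by
    rw [hnprod, Nat.add_sub_cancel, Nat.mul_div_cancel_left _ two_pos]
  -- power reduction mod p₁
  have hpow₁ : ∀ x : ZMod p₁, x ≠ 0 → x ^ (4 * q ^ 2 + 3 * q) = x ^ q := by
    intro x hx
    have h1 : x ^ (p₁ - 1) = 1 := ZMod.pow_card_sub_one_eq_one hx
    rw [hp₁1] at h1
    calc x ^ (4 * q ^ 2 + 3 * q) = x ^ (q + 2 * q * (2 * q + 1)) := by congr 1; ring
      _ = x ^ q * (x ^ (2 * q)) ^ (2 * q + 1) := by rw [pow_add, pow_mul]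
      _ = x ^ q := by rw [h1, one_pow, mul_one]
  -- power reduction mod p₂
  have hpow₂ : ∀ x : ZMod p₂, x ≠ 0 → x ^ (4 * q ^ 2 + 3 * q) = x ^ (2 * q) * x ^ q := by
    intro x hx
    have h1 : x ^ (p₂ - 1) = 1 := ZMod.pow_card_sub_one_eq_one hx
    rw [hp₂1] at h1
    calc x ^ (4 * q ^ 2 + 3 * q) = x ^ (2 * q + q + 4 * q * q) := by congr 1; ring
      _ = x ^ (2 * q) * x ^ q * (x ^ (4 * q)) ^ q := by
          rw [pow_add, pow_add]; congr 1; rw [pow_mul]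
      _ = x ^ (2 * q) * x ^ q := by rw [h1, one_pow, mul_one]
  -- Jacobi symbol decomposition
  have hJ : ∀ a : ℕ, jacobiSym (a : ℤ) (p₁ * p₂) = legendreSym p₁ a * legendreSym p₂ a := by
    intro a
    rw [jacobiSym.mul_right, jacobiSym.legendreSym.to_jacobiSym, jacobiSym.legendreSym.to_jacobiSym]
  -- coprimality
  have hco : ∀ a : ℕ, Nat.Coprime a (p₁ * p₂) ↔ ((a : ZMod p₁) ≠ 0 ∧ (a : ZMod p₂) ≠ 0) := by
    intro a
    rw [Nat.coprime_mul_iff_right]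
    have h1 : Nat.Coprime a p₁ ↔ (a : ZMod p₁) ≠ 0 := by
      rw [Nat.coprime_comm, hp₁.coprime_iff_not_dvd, Ne, ZMod.natCast_eq_zero_iff]
    have h2 : Nat.Coprime a p₂ ↔ (a : ZMod p₂) ≠ 0 := by
      rw [Nat.coprime_comm, hp₂.coprime_iff_not_dvd, Ne, ZMod.natCast_eq_zero_iff]
    rw [h1, h2]
  -- splitting congruences mod p₁ * p₂
  have hsplit : ∀ c d : ℤ, ((c : ZMod (p₁ * p₂)) = (d : ZMod (p₁ * p₂)))
      ↔ ((c : ZMod p₁) = (d : ZMod p₁) ∧ (c : ZMod p₂) = (d : ZMod p₂)) := by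
    intro c d
    rw [ZMod.intCast_eq_intCast_iff, ZMod.intCast_eq_intCast_iff, ZMod.intCast_eq_intCast_iff]
    rw [Nat.cast_mul]
    rw [← Int.modEq_and_modEq_iff_modEq_mul (by simpa using hcop)]
  -- nonzero of roots
  have hqpos : q ≠ 0 := by omega
  -- The key characterization
  have key : ∀ a : ℕ,
      (Nat.Coprime a (p₁ * p₂) ∧ (jacobiSym (a : ℤ) (p₁ * p₂) ≡ (a : ℤ) ^ ((p₁ * p₂ - 1) / 2) [ZMOD ((p₁ * p₂ : ℕ) : ℤ)]))
        ↔ (((a : ZMod p₁) ^ q = 1 ∧ (a : ZMod p₂) ^ q = 1)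
            ∨ ((a : ZMod p₁) ^ q = -1 ∧ (a : ZMod p₂) ^ q = -1)) := by
    intro a
    rw [he]
    have hc₁ : (((a : ℤ)) : ZMod p₁) = (a : ZMod p₁) := by push_cast; rfl
    have hc₂ : (((a : ℤ)) : ZMod p₂) = (a : ZMod p₂) := by push_cast; rfl
    constructor
    · rintro ⟨hcop', hmodeq⟩
      obtain ⟨hx₁, hx₂⟩ := (hco a).mp hcop'
      have hmm : ((jacobiSym (a : ℤ) (p₁ * p₂) : ℤ) : ZMod (p₁ * p₂))
          = (((a : ℤ) ^ (4 * q ^ 2 + 3 * q) : ℤ) : ZMod (p₁ * p₂)) :=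
        (ZMod.intCast_eq_intCast_iff _ _ _).mpr hmodeq
      rw [hsplit] at hmm
      obtain ⟨hm₁, hm₂⟩ := hmm
      rw [hJ a] at hm₁ hm₂
      push_cast at hm₁ hm₂
      rw [hpow₁ _ hx₁] at hm₁
      rw [hpow₂ _ hx₂] at hm₂
      -- mod p₁ : L₁ * L₂ = x₁ ^ q = L₁, so L₂ = 1
      have E₁ : ((legendreSym p₁ a : ℤ) : ZMod p₁) = (a : ZMod p₁) ^ q := by
        have := legendreSym.eq_pow p₁ (a : ℤ); rw [hc₁, hp₁2] at this; exact this
      have E₂ : ((legendreSym p₂ a : ℤ) : ZMod p₂) = (a : ZMod p₂) ^ (2 * q) := by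
        have := legendreSym.eq_pow p₂ (a : ℤ); rw [hc₂, hp₂2] at this; exact this
      have hL₂ : legendreSym p₂ a = 1 := by
        rcases legendreSym.eq_one_or_neg_one p₂ (by rw [hc₂]; exact hx₂) with h | h
        · exact h
        · exfalso
          rw [h] at hm₁
          rw [← E₁] at hm₁
          rcases legendreSym.eq_one_or_neg_one p₁ (by rw [hc₁]; exact hx₁) with h' | h' <;>
            rw [h'] at hm₁ <;> push_cast at hm₁
          · rw [one_mul] at hm₁
            exact ZMod.neg_one_ne_one hm₁
          · rw [neg_mul_neg, one_mul, ← sub_eq_zero,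
              show (1 : ZMod p₁) - -1 = 2 by ring] at hm₁
            have h2 : ((2 : ℕ) : ZMod p₁) = 0 := by exact_mod_cast hm₁
            rw [ZMod.natCast_eq_zero_iff] at h2
            have := Nat.le_of_dvd (by norm_num) h2
            omega
      rw [hL₂] at hm₂
      have hx2q : (a : ZMod p₂) ^ (2 * q) = 1 := by rw [← E₂, hL₂]; push_cast; rfl
      rw [hx2q, one_mul] at hm₂
      push_cast at hm₂
      -- hm₂ : (L₁ : ZMod p₂) = x₂ ^ q
      rcases legendreSym.eq_one_or_neg_one p₁ (by rw [hc₁]; exact hx₁) with h' | h'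
      · left
        constructor
        · rw [← E₁, h']; push_cast; rfl
        · rw [h'] at hm₂; push_cast at hm₂; simpa using hm₂.symm
      · right
        constructor
        · rw [← E₁, h']; push_cast; rfl
        · rw [h'] at hm₂; push_cast at hm₂; simpa using hm₂.symm
    · intro h
      have hx₁ : (a : ZMod p₁) ≠ 0 := by
        rcases h with ⟨h1, _⟩ | ⟨h1, _⟩ <;> intro hz <;> rw [hz, zero_pow hqpos] at h1
        · exact one_ne_zero h1.symm
        · exact neg_ne_zero.mpr one_ne_zero h1.symm
      have hx₂ : (a : ZMod p₂) ≠ 0 := by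
        rcases h with ⟨_, h2⟩ | ⟨_, h2⟩ <;> intro hz <;> rw [hz, zero_pow hqpos] at h2
        · exact one_ne_zero h2.symm
        · exact neg_ne_zero.mpr one_ne_zero h2.symm
      refine ⟨(hco a).mpr ⟨hx₁, hx₂⟩, ?_⟩
      rw [← ZMod.intCast_eq_intCast_iff]
      have hL₂ : legendreSym p₂ a = 1 := by
        rw [aux_legendre_one_iff (by omega) a, hp₂2, mul_comm, pow_mul]
        rcases h with ⟨_, h2⟩ | ⟨_, h2⟩ <;> rw [h2] <;> ring
      have hL₁ : legendreSym p₁ a = 1 ∨ legendreSym p₁ a = -1 :=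
        legendreSym.eq_one_or_neg_one p₁ (by rw [hc₁]; exact hx₁)
      have hx2q : (a : ZMod p₂) ^ (2 * q) = 1 := by
        rw [mul_comm, pow_mul]
        rcases h with ⟨_, h2⟩ | ⟨_, h2⟩ <;> rw [h2] <;> ring
      rw [hsplit]
      rw [hJ a]
      push_cast
      rw [hpow₁ _ hx₁, hpow₂ _ hx₂, hx2q, one_mul]
      have E₁ : ((legendreSym p₁ a : ℤ) : ZMod p₁) = (a : ZMod p₁) ^ q := by
        have := legendreSym.eq_pow p₁ (a : ℤ); rw [hc₁, hp₁2] at this; exact this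
      have E₂ : ((legendreSym p₂ a : ℤ) : ZMod p₂) = (a : ZMod p₂) ^ (2 * q) := by
        have := legendreSym.eq_pow p₂ (a : ℤ); rw [hc₂, hp₂2] at this; exact this
      constructor
      · rw [hL₂]; push_cast
        rw [mul_one, E₁]
      · rw [hL₂]; push_cast
        rw [mul_one]
        rcases h with ⟨h1, h2⟩ | ⟨h1, h2⟩
        · have : legendreSym p₁ a = 1 := by
            rw [aux_legendre_one_iff (by omega) a, hp₁2]; exact h1
          rw [this, h2]; push_cast; rfl
        · have : legendreSym p₁ a = -1 := by
            rw [aux_legendre_neg_one_iff (by omega) a, hp₁2]; exact h1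
          rw [this, h2]; push_cast; rfl
  -- Jacobi value on each branch
  have keyJ₁ : ∀ a : ℕ, ((a : ZMod p₁) ^ q = 1 ∧ (a : ZMod p₂) ^ q = 1) →
      jacobiSym (a : ℤ) (p₁ * p₂) = 1 := by
    rintro a ⟨h1, h2⟩
    rw [hJ a]
    have hL₁ : legendreSym p₁ a = 1 := by
      rw [aux_legendre_one_iff (by omega) a, hp₁2]; exact h1
    have hL₂ : legendreSym p₂ a = 1 := by
      rw [aux_legendre_one_iff (by omega) a, hp₂2, mul_comm, pow_mul, h2]; ring
    rw [hL₁, hL₂]; ring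
  have keyJ₂ : ∀ a : ℕ, ((a : ZMod p₁) ^ q = -1 ∧ (a : ZMod p₂) ^ q = -1) →
      jacobiSym (a : ℤ) (p₁ * p₂) = -1 := by
    rintro a ⟨h1, h2⟩
    rw [hJ a]
    have hL₁ : legendreSym p₁ a = -1 := by
      rw [aux_legendre_neg_one_iff (by omega) a, hp₁2]; exact h1
    have hL₂ : legendreSym p₂ a = 1 := by
      rw [aux_legendre_one_iff (by omega) a, hp₂2, mul_comm, pow_mul, h2]; ring
    rw [hL₁, hL₂]; ring
  -- counting the four sets
  have c₁p : (Finset.univ.filter fun x : ZMod p₁ => x ^ q = 1).card = q :=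
    aux_card_pow_eq_one (by omega) (by rw [hp₁1]; exact ⟨2, by ring⟩)
  have c₁m : (Finset.univ.filter fun x : ZMod p₁ => x ^ q = -1).card = q :=
    aux_card_pow_eq_neg_one (by omega) (by omega) (by rw [hp₁1])
  have c₂p : (Finset.univ.filter fun x : ZMod p₂ => x ^ q = 1).card = q :=
    aux_card_pow_eq_one (by omega) (by rw [hp₂1]; exact ⟨4, by ring⟩)
  have c₂m : (Finset.univ.filter fun x : ZMod p₂ => x ^ q = -1).card = q :=
    aux_card_pow_eq_neg_one (by omega) (by omega) (by rw [hp₂1]; exact ⟨2, by ring⟩)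
  -- rewrite the liar set
  have hEL : eulerLiars (p₁ * p₂) = (Finset.range (p₁ * p₂)).filter
      (fun a : ℕ => Nat.Coprime a (p₁ * p₂) ∧
        (jacobiSym (a : ℤ) (p₁ * p₂) ≡ (a : ℤ) ^ ((p₁ * p₂ - 1) / 2) [ZMOD ((p₁ * p₂ : ℕ) : ℤ)])) := rfl
  have hliars : eulerLiars (p₁ * p₂)
      = (Finset.range (p₁ * p₂)).filter
          (fun a : ℕ => ((a : ZMod p₁) ^ q = 1 ∧ (a : ZMod p₂) ^ q = 1)
            ∨ ((a : ZMod p₁) ^ q = -1 ∧ (a : ZMod p₂) ^ q = -1)) := by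
    rw [hEL]
    apply Finset.filter_congr
    intro a _
    rw [key a]
  have hdisjRange : Disjoint
      ((Finset.range (p₁ * p₂)).filter
        (fun a : ℕ => (a : ZMod p₁) ^ q = 1 ∧ (a : ZMod p₂) ^ q = 1))
      ((Finset.range (p₁ * p₂)).filter
        (fun a : ℕ => (a : ZMod p₁) ^ q = -1 ∧ (a : ZMod p₂) ^ q = -1)) := by
    rw [Finset.disjoint_left]
    intro a ha ha'
    rw [Finset.mem_filter] at ha ha'
    exact ZMod.neg_one_ne_one (ha.2.1.symm.trans ha'.2.1).symm
  have hcardliars : (eulerLiars (p₁ * p₂)).card = 2 * (q * q) := by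
    rw [hliars, Finset.filter_or, Finset.card_union_of_disjoint hdisjRange,
      aux_card_crt hcop (fun x : ZMod p₁ => x ^ q = 1) (fun x : ZMod p₂ => x ^ q = 1),
      aux_card_crt hcop (fun x : ZMod p₁ => x ^ q = -1) (fun x : ZMod p₂ => x ^ q = -1),
      c₁p, c₂p, c₁m, c₂m]
    ring
  have htot : (p₁ * p₂).totient = 8 * (q * q) := by
    rw [Nat.totient_mul hcop, Nat.totient_prime hp₁, Nat.totient_prime hp₂, hp₁1, hp₂1]
    ring
  refine ⟨?_, ?_, ?_⟩
  · rw [hcardliars, htot]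
    set m := q * q
    omega
  · have : (eulerLiars (p₁ * p₂)).filter (fun a : ℕ => jacobiSym (a : ℤ) (p₁ * p₂) = 1)
        = (Finset.range (p₁ * p₂)).filter
            (fun a : ℕ => (a : ZMod p₁) ^ q = 1 ∧ (a : ZMod p₂) ^ q = 1) := by
      rw [hEL, Finset.filter_filter]
      apply Finset.filter_congr
      intro a _
      constructor
      · rintro ⟨hcond, hjac⟩
        rcases (key a).mp hcond with h | h
        · exact h
        · exact absurd (keyJ₂ a h ▸ hjac) (by norm_num)
      · intro h
        exact ⟨(key a).mpr (Or.inl h), keyJ₁ a h⟩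
    rw [aux_coe_card, this,
      aux_card_crt hcop (fun x : ZMod p₁ => x ^ q = 1) (fun x : ZMod p₂ => x ^ q = 1),
      c₁p, c₂p, hcardliars]
    set m := q * q
    omega
  · have : (eulerLiars (p₁ * p₂)).filter (fun a : ℕ => jacobiSym (a : ℤ) (p₁ * p₂) = -1)
        = (Finset.range (p₁ * p₂)).filter
            (fun a : ℕ => (a : ZMod p₁) ^ q = -1 ∧ (a : ZMod p₂) ^ q = -1) := by
      rw [hEL, Finset.filter_filter]
      apply Finset.filter_congr
      intro a _
      constructor
      · rintro ⟨hcond, hjac⟩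
        rcases (key a).mp hcond with h | h
        · exact absurd (keyJ₁ a h ▸ hjac) (by norm_num)
        · exact h
      · intro h
        exact ⟨(key a).mpr (Or.inr h), keyJ₂ a h⟩
    rw [aux_coe_card, this,
      aux_card_crt hcop (fun x : ZMod p₁ => x ^ q = -1) (fun x : ZMod p₂ => x ^ q = -1),
      c₁m, c₂m, hcardliars]
    set m := q * q
    omega
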